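/- Suppose a holomorphic curve has a parametrization x(t) = Σ_{i ≤ s} a_i t^i for |t| > R, where t ∈ ℂ, a_i ∈ ℂⁿ, Σ_{i>0} |a_i| > 0, and s ≥ 0 is an integer. Let f: ℂⁿ → ℂ be a polynomial of degree d. Define the truncated arc x̃(t) = Σ_{−(d−1)s ≤ i ≤ s} a_i t^i for |t| > R. If lim_{t→∞} f(x(t)) = b ∈ ℂ, then lim_{t→∞} f(x̃(t)) = b as well. -/

import Mathlib

open Filter MvPolynomial


lemma multiset_prod_norm_le {ι : Type*} (u : ι → ℂ) (K : ℝ)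
    (hu : ∀ j, ‖u j‖ ≤ K) (M : Multiset ι) :
    ‖(M.map u).prod‖ ≤ K ^ Multiset.card M := by
  induction M using Multiset.induction_on with
  | empty => simp
  | cons a m ih =>
    have hK0 : 0 ≤ K := le_trans (norm_nonneg _) (hu a)
    rw [Multiset.map_cons, Multiset.prod_cons, Multiset.card_cons, pow_succ']
    calc ‖u a * (m.map u).prod‖ = ‖u a‖ * ‖(m.map u).prod‖ := norm_mul _ _
      _ ≤ K * K ^ Multiset.card m :=
        mul_le_mul (hu a) ih (norm_nonneg _) hK0

lemma multiset_prod_sub_prod {ι : Type*} (u v : ι → ℂ) (K δ : ℝ)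
    (hu : ∀ j, ‖u j‖ ≤ K) (hv : ∀ j, ‖v j‖ ≤ K) (hδ : ∀ j, ‖u j - v j‖ ≤ δ)
    (M : Multiset ι) :
    ‖(M.map u).prod - (M.map v).prod‖ ≤ (Multiset.card M : ℝ) * K ^ (Multiset.card M - 1) * δ := by
  induction M using Multiset.induction_on with
  | empty => simp
  | cons a m ih =>
    have hδ0 : 0 ≤ δ := le_trans (norm_nonneg _) (hδ a)
    have hK0 : 0 ≤ K := le_trans (norm_nonneg _) (hu a)
    rw [Multiset.map_cons, Multiset.prod_cons, Multiset.map_cons, Multiset.prod_cons,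
      Multiset.card_cons]
    have key : u a * (m.map u).prod - v a * (m.map v).prod
        = (u a - v a) * (m.map u).prod + v a * ((m.map u).prod - (m.map v).prod) := by ring
    rw [key]
    have h1 : ‖(u a - v a) * (m.map u).prod‖ ≤ δ * K ^ Multiset.card m :=
      (norm_mul _ _).le.trans <| mul_le_mul (hδ a) (multiset_prod_norm_le u K hu m)
        (norm_nonneg _) hδ0
    have h2 : ‖v a * ((m.map u).prod - (m.map v).prod)‖
        ≤ (Multiset.card m : ℝ) * K ^ Multiset.card m * δ := by
      refine (norm_mul _ _).le.trans ?_
      calc ‖v a‖ * ‖(m.map u).prod - (m.map v).prod‖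
          ≤ K * ((Multiset.card m : ℝ) * K ^ (Multiset.card m - 1) * δ) :=
            mul_le_mul (hv a) ih (norm_nonneg _) hK0
        _ ≤ (Multiset.card m : ℝ) * K ^ Multiset.card m * δ := by
          rcases Nat.eq_zero_or_pos (Multiset.card m) with h | h
          · simp [h]
          · rw [show K * ((Multiset.card m : ℝ) * K ^ (Multiset.card m - 1) * δ)
                = (Multiset.card m : ℝ) * (K ^ (Multiset.card m - 1) * K) * δ by ring,
              ← pow_succ, Nat.sub_add_cancel h]
    calc ‖_ + _‖ ≤ _ := norm_add_le _ _
      _ ≤ δ * K ^ Multiset.card m + (Multiset.card m : ℝ) * K ^ Multiset.card m * δ := by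
          exact add_le_add h1 h2
      _ = ((Multiset.card m : ℝ) + 1) * K ^ Multiset.card m * δ := by ring
      _ = _ := by
        rw [Nat.add_sub_cancel]
        push_cast
        ring

lemma monomial_as_multiset {n : ℕ} (m : Fin n →₀ ℕ) (u : Fin n → ℂ) :
    ∏ i ∈ m.support, u i ^ m i = ((Finsupp.toMultiset m).map u).prod := by
  rw [Finsupp.toMultiset_map, Finsupp.prod_toMultiset,
    Finsupp.prod_mapDomain_index (fun b => pow_zero b) (fun b m₁ m₂ => pow_add b m₁ m₂)]
  rfl

lemma eval_sub_bound {n : ℕ} (f : MvPolynomial (Fin n) ℂ) (d : ℕ) (hd : f.totalDegree ≤ d) :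
    ∃ C : ℝ, 0 ≤ C ∧ ∀ (K : ℝ), 1 ≤ K → ∀ u v : Fin n → ℂ, ‖u‖ ≤ K → ‖v‖ ≤ K →
      ‖eval u f - eval v f‖ ≤ C * K ^ (d - 1) * ‖u - v‖ := by
  refine ⟨(∑ m ∈ f.support, ‖f.coeff m‖) * d, by positivity, fun K hK u v hu hv => ?_⟩
  have hK0 : (0 : ℝ) ≤ K := le_trans zero_le_one hK
  rw [eval_eq, eval_eq, ← Finset.sum_sub_distrib]
  refine (norm_sum_le _ _).trans ?_
  rw [Finset.sum_mul, Finset.sum_mul, Finset.sum_mul]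
  refine Finset.sum_le_sum fun m hm => ?_
  rw [← mul_sub, norm_mul]
  have hcard : Multiset.card (Finsupp.toMultiset m) ≤ d := by
    rw [Finsupp.card_toMultiset]
    exact le_trans (MvPolynomial.le_totalDegree hm) hd
  have huj : ∀ j, ‖u j‖ ≤ K := fun j => (norm_le_pi_norm u j).trans hu
  have hvj : ∀ j, ‖v j‖ ≤ K := fun j => (norm_le_pi_norm v j).trans hv
  have hdj : ∀ j, ‖u j - v j‖ ≤ ‖u - v‖ := fun j => norm_le_pi_norm (u - v) j
  have key := multiset_prod_sub_prod u v K ‖u - v‖ huj hvj hdj (Finsupp.toMultiset m)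
  rw [← monomial_as_multiset, ← monomial_as_multiset] at key
  calc ‖f.coeff m‖ * ‖∏ i ∈ m.support, u i ^ m i - ∏ i ∈ m.support, v i ^ m i‖
      ≤ ‖f.coeff m‖ * ((Multiset.card (Finsupp.toMultiset m) : ℝ)
          * K ^ (Multiset.card (Finsupp.toMultiset m) - 1) * ‖u - v‖) :=
        mul_le_mul_of_nonneg_left key (norm_nonneg _)
    _ ≤ ‖f.coeff m‖ * ((d : ℝ) * K ^ (d - 1) * ‖u - v‖) := by
        refine mul_le_mul_of_nonneg_left ?_ (norm_nonneg _)
        refine mul_le_mul ?_ le_rfl (norm_nonneg _) (by positivity)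
        exact mul_le_mul (Nat.cast_le.mpr hcard)
          (pow_le_pow_right₀ hK (Nat.sub_le_sub_right hcard 1)) (by positivity) (by positivity)
    _ = ‖f.coeff m‖ * d * K ^ (d - 1) * ‖u - v‖ := by ring

lemma alg_helper (C Y Z W P : ℝ) (hZ : Z ≠ 0) :
    C * (Y * Z) * (W / (Z * P)) = C * Y * W / P := by
  rcases eq_or_ne P 0 with h | h
  · simp [h]
  · field_simp

set_option maxHeartbeats 2000000 in
/-- **Truncation lemma (complex case).**  If a holomorphic curve has a parametrization
`x(t) = ∑_{i ≤ s} aᵢ tⁱ` for `|t| > R` (a convergent Laurent series with finitely many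
positive-power terms), `f : ℂⁿ → ℂ` is a polynomial of degree `d`, and
`f(x(t)) → b` as `t → ∞`, then the truncated arc
`x̃(t) = ∑_{-(d-1)s ≤ i ≤ s} aᵢ tⁱ` satisfies `f(x̃(t)) → b` as well. -/
theorem truncation_complex {n : ℕ} (s : ℕ) (R : ℝ)
    (a : ℤ → Fin n → ℂ) (x : ℂ → Fin n → ℂ)
    (hsupp : ∀ i : ℤ, (s : ℤ) < i → a i = 0)
    (hconv : ∀ t : ℂ, R < ‖t‖ → HasSum (fun i : ℤ => t ^ i • a i) (x t))
    (hpos : ∃ i : ℤ, 0 < i ∧ a i ≠ 0)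
    (f : MvPolynomial (Fin n) ℂ) (d : ℕ) (hd : f.totalDegree = d)
    (b : ℂ)
    (hlim : Tendsto (fun t => MvPolynomial.eval (x t) f) (Filter.comap norm Filter.atTop) (nhds b)) :
    Tendsto
      (fun t : ℂ => MvPolynomial.eval
        (fun j => ∑ i ∈ Finset.Icc (-(((d : ℤ) - 1) * s)) (s : ℤ), t ^ i * a i j) f)
      (Filter.comap norm Filter.atTop) (nhds b) := by
  classical
  set T : Finset ℤ := Finset.Icc (-(((d : ℤ) - 1) * s)) (s : ℤ) with hTdef
  set xt : ℂ → Fin n → ℂ := fun t => ∑ i ∈ T, t ^ i • a i with hxtdef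
  have hgoalfun : ∀ t : ℂ,
      (fun j => ∑ i ∈ Finset.Icc (-(((d : ℤ) - 1) * s)) (s : ℤ), t ^ i * a i j) = xt t := by
    intro t
    funext j
    rw [hxtdef]
    simp [Finset.sum_apply, hTdef]
  simp only [← hTdef] at hgoalfun
  simp only [hgoalfun]
  have hl : Tendsto (fun t : ℂ => ‖t‖) (Filter.comap norm Filter.atTop) atTop := tendsto_comap
  rcases Nat.eq_zero_or_pos d with hd0 | hd1
  · -- degenerate case : f is constant
    subst hd0
    have hconst : ∀ m ∈ f.support, ∀ j, m j = 0 :=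
      (MvPolynomial.totalDegree_eq_zero_iff (Fin n) f).mp hd
    have hsame : ∀ u v : Fin n → ℂ, eval u f = eval v f := by
      intro u v
      rw [eval_eq, eval_eq]
      refine Finset.sum_congr rfl fun m hm => ?_
      have hm0 : m = 0 := Finsupp.ext fun j => hconst m hm j
      subst hm0
      simp
    have : (fun t : ℂ => eval (xt t) f) = fun t : ℂ => eval (x t) f :=
      funext fun t => hsame _ _
    rw [this]
    exact hlim
  · -- main case : d ≥ 1
    obtain ⟨C, hC0, hC⟩ := eval_sub_bound f d hd.le
    set N : ℕ := (d - 1) * s with hNdef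
    have hNZ : ((N : ℕ) : ℤ) = ((d : ℤ) - 1) * s := by
      rw [hNdef]
      push_cast [Nat.cast_sub hd1]
      ring
    set ρ : ℝ := max R 1 + 1 with hρdef
    have hρ1 : (1 : ℝ) ≤ ρ := by
      have := le_max_right R 1
      rw [hρdef]; linarith
    have hρR : R < ρ := by
      have := le_max_left R 1
      rw [hρdef]; linarith
    have hρ0 : (0 : ℝ) < ρ := lt_of_lt_of_le one_pos hρ1
    have ht0n : ‖(ρ : ℂ)‖ = ρ := by
      rw [Complex.norm_real]
      exact Real.norm_of_nonneg hρ0.le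
    have hsum0 := hconv (ρ : ℂ) (by rw [ht0n]; exact hρR)
    -- a uniform bound on the coefficients
    obtain ⟨M, hM0, hM⟩ : ∃ M : ℝ, 0 ≤ M ∧ ∀ i : ℤ, ‖a i‖ ≤ M * ρ ^ (-i) := by
      have hco : Tendsto (fun i : ℤ => ((ρ : ℂ)) ^ i • a i) cofinite (nhds 0) :=
        hsum0.summable.tendsto_cofinite_zero
      have hev : ∀ᶠ i in cofinite, ‖((ρ : ℂ)) ^ i • a i‖ < 1 := by
        have := Metric.tendsto_nhds.mp hco 1 one_pos
        simpa [dist_zero_right] using this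
      have hfin : {i : ℤ | ¬ ‖((ρ : ℂ)) ^ i • a i‖ < 1}.Finite :=
        Filter.eventually_cofinite.mp hev
      set F : Finset ℤ := hfin.toFinset with hFdef
      refine ⟨1 + ∑ i ∈ F, ‖((ρ : ℂ)) ^ i • a i‖,
        by positivity, fun i => ?_⟩
      have hb : ‖((ρ : ℂ)) ^ i • a i‖ ≤ 1 + ∑ j ∈ F, ‖((ρ : ℂ)) ^ j • a j‖ := by
        by_cases hi : i ∈ F
        · have h1 := Finset.single_le_sum
            (f := fun j : ℤ => ‖((ρ : ℂ)) ^ j • a j‖) (fun j _ => norm_nonneg _) hi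
          linarith
        · have h2 : ‖((ρ : ℂ)) ^ i • a i‖ < 1 := by
            by_contra hcon
            exact hi (by rw [hFdef, Set.Finite.mem_toFinset]; exact hcon)
          have h3 : (0 : ℝ) ≤ ∑ j ∈ F, ‖((ρ : ℂ)) ^ j • a j‖ :=
            Finset.sum_nonneg fun j _ => norm_nonneg _
          linarith
      rw [norm_smul, norm_zpow, ht0n] at hb
      have hzp : (0 : ℝ) < ρ ^ (-i) := zpow_pos hρ0 _
      calc ‖a i‖ = ρ ^ (-i) * (ρ ^ i * ‖a i‖) := by
            rw [← mul_assoc, ← zpow_add₀ (ne_of_gt hρ0)]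
            simp
        _ ≤ ρ ^ (-i) * (1 + ∑ j ∈ F, ‖((ρ : ℂ)) ^ j • a j‖) :=
            mul_le_mul_of_nonneg_left hb hzp.le
        _ = (1 + ∑ j ∈ F, ‖((ρ : ℂ)) ^ j • a j‖) * ρ ^ (-i) := mul_comm _ _
    set C₂ : ℝ := ∑ i ∈ T, ‖a i‖ with hC₂def
    have hC₂0 : 0 ≤ C₂ := Finset.sum_nonneg fun i _ => norm_nonneg _
    set C₁ : ℝ := 2 * M * ρ ^ (N + 1) with hC₁def
    have hC₁0 : 0 ≤ C₁ := by positivity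
    set A : ℝ := C₂ + C₁ + 1 with hAdef
    have hA1 : 1 ≤ A := by rw [hAdef]; linarith
    set Cbig : ℝ := C * A ^ (d - 1) * C₁ with hCbigdef
    have key : ∀ t : ℂ, 2 * ρ ≤ ‖t‖ → ‖eval (xt t) f - eval (x t) f‖ ≤ Cbig / ‖t‖ := by
      intro t ht
      have htn1 : 1 ≤ ‖t‖ := by linarith
      have htn0 : 0 < ‖t‖ := lt_of_lt_of_le one_pos htn1
      have hRt : R < ‖t‖ := by linarith
      have hx := hconv t hRt
      have hsum := hx.summable
      have hnormsum : Summable (fun i : ℤ => ‖t ^ i • a i‖) := summable_norm_iff.mpr hsum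
      have hdecomp : (xt t) + ∑' (i : {i : ℤ // i ∉ T}), t ^ (i : ℤ) • a (i : ℤ) = x t := by
        rw [hxtdef]
        rw [hsum.sum_add_tsum_subtype_compl T, hx.tsum_eq]
      set r : ℝ := ρ / ‖t‖ with hrdef
      have hr0 : 0 < r := div_pos hρ0 htn0
      have hr2 : r ≤ 1 / 2 := by
        rw [hrdef, div_le_div_iff₀ htn0 two_pos]
        linarith
      have hr1 : r < 1 := lt_of_le_of_lt hr2 (by norm_num)
      set c : ℤ → ℝ := fun i => if i < -(N : ℤ) then M * ρ ^ (-i) * ‖t‖ ^ i else 0 with hcdef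
      have hc0 : ∀ i, 0 ≤ c i := by
        intro i
        rw [hcdef]
        dsimp only
        split
        · positivity
        · exact le_rfl
      set e : ℕ → ℤ := fun k => -(N : ℤ) - 1 - k with hedef
      have he_inj : Function.Injective e := by
        intro k1 k2 h
        rw [hedef] at h
        dsimp only at h
        omega
      have hce : ∀ k : ℕ, c (e k) = (M * r ^ (N + 1)) * r ^ k := by
        intro k
        have h1 : e k < -(N : ℤ) := by rw [hedef]; dsimp only; omega
        have hek : e k = -(((N + 1 + k : ℕ) : ℤ)) := by rw [hedef]; push_cast; ring
        rw [hcdef]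
        dsimp only
        rw [if_pos h1, hek, neg_neg, zpow_natCast, zpow_neg, zpow_natCast, hrdef,
          div_pow, div_pow, pow_add, pow_add, pow_add]
        field_simp
      have hgeo : Summable (fun k : ℕ => (M * r ^ (N + 1)) * r ^ k) :=
        (summable_geometric_of_lt_one hr0.le hr1).mul_left _
      have hgeo' : Summable (fun k : ℕ => c (e k)) := hgeo.congr fun k => (hce k).symm
      have hcsupp : Function.support c ⊆ Set.range e := by
        intro i hi
        have hlow : i < -(N : ℤ) := by
          by_contra h
          apply hi
          rw [hcdef]
          dsimp only
          rw [if_neg h]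
        exact ⟨(-(N : ℤ) - 1 - i).toNat, by rw [hedef]; dsimp only; omega⟩
      have hcsum : Summable c := by
        refine (he_inj.summable_iff ?_).mp hgeo'
        intro i hi
        by_contra h
        exact hi (hcsupp h)
      have htsum_c : ∑' i : ℤ, c i ≤ 2 * M * r ^ (N + 1) := by
        rw [← he_inj.tsum_eq hcsupp]
        calc ∑' k : ℕ, c (e k) = ∑' k : ℕ, (M * r ^ (N + 1)) * r ^ k := tsum_congr hce
          _ = (M * r ^ (N + 1)) * (1 - r)⁻¹ := by
              rw [tsum_mul_left, tsum_geometric_of_lt_one hr0.le hr1]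
          _ ≤ (M * r ^ (N + 1)) * 2 := by
              refine mul_le_mul_of_nonneg_left ?_ (by positivity)
              have h12 : (1 : ℝ) / 2 ≤ 1 - r := by linarith
              calc (1 - r)⁻¹ ≤ ((1 : ℝ) / 2)⁻¹ :=
                    inv_anti₀ (by norm_num) h12
                _ = 2 := by norm_num
          _ = 2 * M * r ^ (N + 1) := by ring
      set τ : Fin n → ℂ := ∑' (i : {i : ℤ // i ∉ T}), t ^ (i : ℤ) • a (i : ℤ) with hτdef
      have hτ : ‖τ‖ ≤ C₁ / ‖t‖ ^ (N + 1) := by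
        have h1 : ‖τ‖ ≤ ∑' (i : {i : ℤ // i ∉ T}), ‖t ^ (i : ℤ) • a (i : ℤ)‖ :=
          norm_tsum_le_tsum_norm (hnormsum.subtype _)
        have h2 : ∑' (i : {i : ℤ // i ∉ T}), ‖t ^ (i : ℤ) • a (i : ℤ)‖
            ≤ ∑' (i : {i : ℤ // i ∉ T}), c (i : ℤ) := by
          refine (hnormsum.subtype _).tsum_le_tsum ?_ (hcsum.subtype _)
          rintro ⟨i, hi⟩
          dsimp only [Function.comp_apply]
          by_cases hlow : i < -(N : ℤ)
          · rw [hcdef]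
            dsimp only
            rw [if_pos hlow, norm_smul, norm_zpow]
            calc ‖t‖ ^ i * ‖a i‖ ≤ ‖t‖ ^ i * (M * ρ ^ (-i)) :=
                  mul_le_mul_of_nonneg_left (hM i) (zpow_pos htn0 _).le
              _ = M * ρ ^ (-i) * ‖t‖ ^ i := by ring
          · have hge : (-(((d : ℤ) - 1) * s)) ≤ i := by rw [← hNZ]; omega
            have his : (s : ℤ) < i := by
              rw [hTdef, Finset.mem_Icc] at hi
              push_neg at hi
              exact hi hge
            rw [hsupp i his]
            simpa using hc0 i
        have h3 : ∑' (i : {i : ℤ // i ∉ T}), c (i : ℤ) ≤ ∑' i : ℤ, c i :=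
          (hcsum.subtype _).tsum_le_tsum_of_inj Subtype.val Subtype.val_injective (fun i _ => hc0 i)
            (fun i => le_rfl) hcsum
        have h4 : (2 : ℝ) * M * r ^ (N + 1) = C₁ / ‖t‖ ^ (N + 1) := by
          rw [hC₁def, hrdef, div_pow]
          field_simp
        linarith
      have hxt_norm : ‖xt t‖ ≤ C₂ * ‖t‖ ^ s := by
        rw [hxtdef]
        refine (norm_sum_le _ _).trans ?_
        rw [hC₂def, Finset.sum_mul]
        refine Finset.sum_le_sum fun i hi => ?_
        rw [norm_smul, norm_zpow]
        have his : i ≤ (s : ℤ) := by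
          rw [hTdef, Finset.mem_Icc] at hi
          exact hi.2
        calc ‖t‖ ^ i * ‖a i‖ ≤ ‖t‖ ^ (s : ℤ) * ‖a i‖ :=
            mul_le_mul_of_nonneg_right (zpow_le_zpow_right₀ htn1 his) (norm_nonneg _)
          _ = ‖a i‖ * ‖t‖ ^ s := by rw [zpow_natCast]; ring
      have hts1 : (1 : ℝ) ≤ ‖t‖ ^ s := one_le_pow₀ htn1
      have hts0 : (0 : ℝ) < ‖t‖ ^ s := lt_of_lt_of_le one_pos hts1
      have hdiff_eq : x t - xt t = τ := by
        rw [← hdecomp, add_sub_cancel_left]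
      have hK1 : 1 ≤ A * ‖t‖ ^ s := by nlinarith
      have hxtK : ‖xt t‖ ≤ A * ‖t‖ ^ s := by nlinarith
      have hxK : ‖x t‖ ≤ A * ‖t‖ ^ s := by
        have h5 : ‖x t‖ ≤ ‖xt t‖ + ‖τ‖ := by
          rw [← hdecomp]
          exact norm_add_le _ _
        have h6 : C₁ / ‖t‖ ^ (N + 1) ≤ C₁ := div_le_self hC₁0 (one_le_pow₀ htn1)
        nlinarith
      have happ := hC (A * ‖t‖ ^ s) hK1 (xt t) (x t) hxtK hxK
      calc ‖eval (xt t) f - eval (x t) f‖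
          ≤ C * (A * ‖t‖ ^ s) ^ (d - 1) * ‖xt t - x t‖ := happ
        _ = C * (A * ‖t‖ ^ s) ^ (d - 1) * ‖τ‖ := by rw [norm_sub_rev, hdiff_eq]
        _ ≤ C * (A * ‖t‖ ^ s) ^ (d - 1) * (C₁ / ‖t‖ ^ (N + 1)) :=
            mul_le_mul_of_nonneg_left hτ (by positivity)
        _ = Cbig / ‖t‖ := by
            rw [hCbigdef, mul_pow, ← pow_mul]
            have hsN : s * (d - 1) = N := by rw [hNdef, Nat.mul_comm]
            rw [hsN, pow_succ]
            exact alg_helper C (A ^ (d - 1)) (‖t‖ ^ N) C₁ ‖t‖ (by positivity)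
    have hev : ∀ᶠ t : ℂ in Filter.comap norm Filter.atTop,
        ‖eval (xt t) f - eval (x t) f‖ ≤ Cbig / ‖t‖ := by
      filter_upwards [hl.eventually (eventually_ge_atTop (2 * ρ))] with t ht using key t ht
    have hlim0 : Tendsto (fun t : ℂ => Cbig / ‖t‖) (Filter.comap norm Filter.atTop) (nhds 0) :=
      tendsto_const_nhds.div_atTop hl
    have hdiff := squeeze_zero_norm' hev hlim0
    have hfinal := hlim.add hdiff
    simp only [add_zero] at hfinal
    refine hfinal.congr fun t => ?_
    ring
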